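/- Summing the OPA closed-form weights over ranks r gives the attribute-under-expert weight w*_{is} = 1/(t_i s_{ij} (∑_{p=1}^{I}1/p)(∑_{q=1}^{J}1/q)) = v_s^{RR}/(t_i ∑_{p=1}^{I}1/p), where v_s^{RR} = 1/(s_{ij} ∑_{q=1}^{J}1/q) is the rank reciprocal weight. -/

import Mathlib

open Finset

lemma double_sum_eq (K : ℕ) :
    ∑ r ∈ Finset.Icc 1 K, ∑ h ∈ Finset.Icc r K, (1 : ℝ) / h = K := by
  induction K with
  | zero => simp
  | succ K ih =>
    have h1 : ∀ r ∈ Finset.Icc 1 (K+1), ∑ h ∈ Finset.Icc r (K+1), (1:ℝ)/h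
        = (∑ h ∈ Finset.Icc r K, (1:ℝ)/h) + 1/(K+1) := by
      intro r hr
      simp only [Finset.mem_Icc] at hr
      rw [Finset.sum_Icc_succ_top (by omega : r ≤ K+1)]; push_cast; ring
    rw [Finset.sum_congr rfl h1, Finset.sum_add_distrib, Finset.sum_const, Nat.card_Icc]
    rw [Finset.sum_Icc_succ_top (by omega : 1 ≤ K+1), ih]
    have : Finset.Icc (K+1) K = ∅ := by rw [Finset.Icc_eq_empty]; omega
    rw [this]
    have hK1 : ((K:ℝ)+1) ≠ 0 := by positivity
    push_cast
    field_simp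
    simp [hK1]


lemma my_harm_pos (n : ℕ) (hn : 0 < n) :
    0 < ∑ p ∈ Finset.Icc 1 n, (1 : ℝ) / p := by
  apply Finset.sum_pos
  · intro i hi
    simp only [Finset.mem_Icc] at hi
    have : 0 < i := hi.1
    positivity
  · exact ⟨1, by simp; omega⟩

/-- Summing OPA closed-form weights over ranks gives attribute-under-expert weights,
which equal rank reciprocal weights divided by the expert factor. -/
theorem stmt_8 (I J K : ℕ) (hI : 0 < I) (hJ : 0 < J) (hK : 0 < K)
    (ti sij : ℝ) (hti : 0 < ti) (hsij : 0 < sij)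
    (w : ℕ → ℝ)
    (hw : ∀ r, w r =
      (∑ h ∈ Finset.Icc r K, (1 : ℝ) / h) /
        (ti * sij * K * (∑ p ∈ Finset.Icc 1 I, (1 : ℝ) / p) *
          (∑ q ∈ Finset.Icc 1 J, (1 : ℝ) / q)))
    (vRR : ℝ)
    (hvRR : vRR = 1 / (sij * ∑ q ∈ Finset.Icc 1 J, (1 : ℝ) / q)) :
    ∑ r ∈ Finset.Icc 1 K, w r =
      1 / (ti * sij * (∑ p ∈ Finset.Icc 1 I, (1 : ℝ) / p) *
        (∑ q ∈ Finset.Icc 1 J, (1 : ℝ) / q)) ∧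
    ∑ r ∈ Finset.Icc 1 K, w r = vRR / (ti * ∑ p ∈ Finset.Icc 1 I, (1 : ℝ) / p) := by
  have hP := my_harm_pos I hI
  have hQ := my_harm_pos J hJ
  have hKR : (0:ℝ) < K := by exact_mod_cast hK
  have hsum : ∑ r ∈ Finset.Icc 1 K, w r =
      1 / (ti * sij * (∑ p ∈ Finset.Icc 1 I, (1 : ℝ) / p) *
        (∑ q ∈ Finset.Icc 1 J, (1 : ℝ) / q)) := by
    simp only [hw, ← Finset.sum_div]
    rw [double_sum_eq K]
    field_simp
  refine ⟨hsum, ?_⟩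
  rw [hsum, hvRR]
  field_simp
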